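/- Let α be a finite type with N elements, let k and n be integers with 1 ≤ k ≤ n ≤ N, and set t = ⌊n/k⌋. Consider the probability distribution (a PMF, built with the PMF monad from uniform distributions on finite sets) on t-tuples of size-k subsets of α obtained by the following process: (i) sample C uniformly from the size-n subsets of α; (ii) independently of each other, sample I₁, …, I_t uniformly from the size-k subsets of Fin N; (iii) sample g uniformly from the set of injective functions from the finite set ⋃_{j=1}^t I_j to C (this set is nonempty since |⋃_j I_j| ≤ t·k ≤ n); (iv) output the tuple of images (g '' I₁, …, g '' I_t). Then every tuple (S₁, …, S_t) of size-k subsets of α receives probability (Nat.choose N k)^{−t} under this distribution; equivalently, the output tuple has the same distribution as t independent uniformly random size-k subsets of α. -/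

import Mathlib

set_option linter.unusedSectionVars false
set_option maxHeartbeats 1000000

open Finset
open scoped ENNReal

section AuxSigma

open Finset

lemma aux_nat_id {N n u : ℕ} (hun : u ≤ n) (hnN : n ≤ N) :
    (N - u).choose (n - u) * N.descFactorial u = N.choose n * n.descFactorial u := by
  rw [Nat.descFactorial_eq_factorial_mul_choose, Nat.descFactorial_eq_factorial_mul_choose]
  have h := Nat.choose_mul (n := N) hun
  calc (N - u).choose (n - u) * (Nat.factorial u * N.choose u)
      = Nat.factorial u * (N.choose u * (N - u).choose (n - u)) := by ring
    _ = Nat.factorial u * (N.choose n * n.choose u) := by rw [← h]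
    _ = N.choose n * (Nat.factorial u * n.choose u) := by ring

lemma aux_superset_count {α : Type*} [Fintype α] [DecidableEq α] (T : Finset α) (n : ℕ)
    (hTn : T.card ≤ n) :
    ((Finset.univ.filter fun C : {C : Finset α // C.card = n} => T ⊆ C.1)).card
      = (Fintype.card α - T.card).choose (n - T.card) := by
  have hpc := Finset.card_powersetCard (n - T.card) Tᶜ
  rw [Finset.card_compl] at hpc
  rw [← hpc]
  refine Finset.card_bij' (fun C _ => C.1 \ T) (fun D hD => ⟨D ∪ T, ?_⟩) ?_ ?_ ?_ ?_
  · rw [Finset.mem_powersetCard] at hD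
    have hdisj : Disjoint D T := by
      refine Finset.disjoint_left.mpr fun a haD haT => ?_
      exact (Finset.mem_compl.mp (hD.1 haD)) haT
    rw [Finset.card_union_of_disjoint hdisj, hD.2]
    omega
  · intro C hC
    rw [Finset.mem_filter] at hC
    rw [Finset.mem_powersetCard]
    constructor
    · intro a ha
      rw [Finset.mem_sdiff] at ha
      exact Finset.mem_compl.mpr ha.2
    · rw [Finset.card_sdiff_of_subset hC.2, C.2]
  · intro D hD
    simp only [Finset.mem_filter, Finset.mem_univ, true_and]
    exact Finset.subset_union_right
  · intro C hC
    rw [Finset.mem_filter] at hC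
    exact Subtype.ext (Finset.sdiff_union_of_subset hC.2)
  · intro D hD
    rw [Finset.mem_powersetCard] at hD
    have hdisj : Disjoint D T := by
      refine Finset.disjoint_left.mpr fun a haD haT => ?_
      exact (Finset.mem_compl.mp (hD.1 haD)) haT
    exact Finset.union_sdiff_cancel_right hdisj

lemma aux_card_inj {α β : Type*} [Fintype α] [Fintype β] [DecidableEq α] [DecidableEq β] (C : Finset α) :
    Fintype.card {g : β → α // Function.Injective g ∧ ∀ x, g x ∈ C}
      = C.card.descFactorial (Fintype.card β) := by
  have e : {g : β → α // Function.Injective g ∧ ∀ x, g x ∈ C} ≃ (β ↪ ↥C) :=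
    { toFun := fun g => ⟨fun x => ⟨g.1 x, g.2.2 x⟩, fun a b h => g.2.1 (congrArg Subtype.val h)⟩
      invFun := fun e => ⟨fun x => (e x).1, fun a b h => e.injective (Subtype.ext h),
        fun x => (e x).2⟩
      left_inv := fun g => rfl
      right_inv := fun e => rfl }
  rw [Fintype.card_congr e, Fintype.card_embedding_eq, Fintype.card_coe]


open Finset



lemma aux_sum_C {α γ : Type*} [Fintype α] [Fintype γ] [DecidableEq α] [DecidableEq γ]
    (n : ℕ) (hu : Fintype.card γ ≤ n)
    (P : (γ → α) → Prop) [DecidablePred P] :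
    ∑ C : {C : Finset α // C.card = n},
        (Finset.univ.filter fun f : γ → α =>
          (Function.Injective f ∧ ∀ x, f x ∈ C.1) ∧ P f).card
      = (Finset.univ.filter fun f : γ → α => Function.Injective f ∧ P f).card *
          (Fintype.card α - Fintype.card γ).choose (n - Fintype.card γ) := by
  have step1 : ∀ C : {C : Finset α // C.card = n},
      (Finset.univ.filter fun f : γ → α =>
        (Function.Injective f ∧ ∀ x, f x ∈ C.1) ∧ P f).card
      = ∑ f : γ → α, if (Function.Injective f ∧ P f) ∧ (∀ x, f x ∈ C.1) then 1 else 0 := by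
    intro C
    rw [Finset.card_filter]
    refine Finset.sum_congr rfl fun f _ => ?_
    congr 1
    simp only [eq_iff_iff]; tauto
  simp only [step1]
  rw [Finset.sum_comm]
  have step2 : ∀ f : γ → α,
      (∑ C : {C : Finset α // C.card = n}, if (Function.Injective f ∧ P f) ∧ (∀ x, f x ∈ C.1) then 1 else 0)
      = if Function.Injective f ∧ P f then (Fintype.card α - Fintype.card γ).choose (n - Fintype.card γ) else 0 := by
    intro f
    by_cases hf : Function.Injective f ∧ P f
    · simp only [hf, true_and, if_true]
      have hcond : ∀ C : {C : Finset α // C.card = n},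
          (∀ x, f x ∈ C.1) ↔ (Finset.univ.image f ⊆ C.1) := by
        intro C
        constructor
        · intro h a ha
          obtain ⟨x, -, rfl⟩ := Finset.mem_image.mp ha
          exact h x
        · intro h x
          exact h (Finset.mem_image_of_mem f (Finset.mem_univ x))
      have hT : (Finset.univ.image f).card = Fintype.card γ := by
        rw [Finset.card_image_of_injective _ hf.1, Finset.card_univ]
      calc (∑ C : {C : Finset α // C.card = n}, if (∀ x, f x ∈ C.1) then 1 else 0)
          = ((Finset.univ.filter fun C : {C : Finset α // C.card = n} =>
              Finset.univ.image f ⊆ C.1)).card := by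
            rw [Finset.card_filter]
            refine Finset.sum_congr rfl fun C _ => ?_
            congr 1
            simp only [eq_iff_iff]
            exact hcond C
        _ = (Fintype.card α - Fintype.card γ).choose (n - Fintype.card γ) := by
            rw [aux_superset_count _ n (hT ▸ hu), hT]
    · simp only [hf, false_and, if_false, Finset.sum_const_zero]
  simp only [step2]
  rw [Finset.sum_ite, Finset.sum_const_zero, add_zero, Finset.sum_const, smul_eq_mul]

lemma aux_card_U {α β : Type*} [Fintype α] [Fintype β] [DecidableEq α] [DecidableEq β]
    {t k : ℕ} (S : Fin t → Finset α) (I : Fin t → {I : Finset β // I.card = k})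
    (f : ↥(Finset.univ.biUnion fun j => (I j).1) → α) (hinj : Function.Injective f)
    (hout : S = fun i => Finset.image
      (fun x => f ⟨x.1, Finset.mem_biUnion.mpr ⟨i, Finset.mem_univ i, x.2⟩⟩) ((I i).1.attach)) :
    (Finset.univ.biUnion fun j => (I j).1).card = (Finset.univ.biUnion S).card := by
  have himg : Finset.univ.image f = Finset.univ.biUnion S := by
    ext a
    simp only [Finset.mem_image, Finset.mem_univ, true_and, Finset.mem_biUnion]
    constructor
    · rintro ⟨x, rfl⟩
      obtain ⟨j, -, hj⟩ := Finset.mem_biUnion.mp x.2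
      refine ⟨j, ?_⟩
      rw [hout]
      exact Finset.mem_image.mpr ⟨⟨x.1, hj⟩, Finset.mem_attach _ _, rfl⟩
    · rintro ⟨j, ha⟩
      rw [hout] at ha
      obtain ⟨x, -, rfl⟩ := Finset.mem_image.mp ha
      exact ⟨⟨x.1, Finset.mem_biUnion.mpr ⟨j, Finset.mem_univ j, x.2⟩⟩, rfl⟩
  calc (Finset.univ.biUnion fun j => (I j).1).card
      = Fintype.card ↥(Finset.univ.biUnion fun j => (I j).1) := (Fintype.card_coe _).symm
    _ = (Finset.univ : Finset ↥(Finset.univ.biUnion fun j => (I j).1)).card := rfl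
    _ = ((Finset.univ : Finset ↥(Finset.univ.biUnion fun j => (I j).1)).image f).card :=
        (Finset.card_image_of_injective _ hinj).symm
    _ = (Finset.univ.biUnion S).card := by rw [himg]



variable {α β : Type*} [Fintype α] [Fintype β] [DecidableEq α] [DecidableEq β] {t k : ℕ}

/-- The sigma type of pairs (I, f) appearing in the sampling process. -/
abbrev SigT (S : Fin t → Finset α) (k : ℕ) (β : Type*) [Fintype β] [DecidableEq β] :=
  Σ I : Fin t → {I : Finset β // I.card = k},
    {f : ↥(Finset.univ.biUnion fun j => (I j).1) → α //
      Function.Injective f ∧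
        S = fun i => Finset.image
          (fun x => f ⟨x.1, Finset.mem_biUnion.mpr ⟨i, Finset.mem_univ i, x.2⟩⟩)
          ((I i).1.attach)}

lemma memW {S : Fin t → Finset α} (j : Fin t) (s : α) (hs : s ∈ S j) :
    s ∈ Finset.univ.biUnion S :=
  Finset.mem_biUnion.mpr ⟨j, Finset.mem_univ j, hs⟩

/-- the I-part of the forward map -/
def phiI (S : Fin t → Finset α) (hS : ∀ i, (S i).card = k)
    (e : ↥(Finset.univ.biUnion S) ↪ β) (j : Fin t) : {I : Finset β // I.card = k} :=
  ⟨(S j).attach.image fun s => e ⟨s.1, memW j s.1 s.2⟩, by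
    have hinj : Function.Injective fun s : ↥(S j) => e ⟨s.1, memW j s.1 s.2⟩ :=
      fun a b h => by
        have h2 := congrArg Subtype.val (e.injective h)
        exact Subtype.ext h2
    rw [Finset.card_image_of_injective _ hinj, Finset.card_attach, hS j]⟩

lemma mem_phiU (S : Fin t → Finset α) (hS : ∀ i, (S i).card = k)
    (e : ↥(Finset.univ.biUnion S) ↪ β) (x : β) :
    (x ∈ Finset.univ.biUnion fun j => (phiI S hS e j).1) ↔
      ∃ w : ↥(Finset.univ.biUnion S), e w = x := by
  simp only [Finset.mem_biUnion, Finset.mem_univ, true_and, phiI, Finset.mem_image,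
    Finset.mem_attach, true_and]
  constructor
  · rintro ⟨j, s, rfl⟩
    exact ⟨⟨s.1, memW j s.1 s.2⟩, rfl⟩
  · rintro ⟨w, rfl⟩
    obtain ⟨j, -, hj⟩ := Finset.mem_biUnion.mp w.2
    exact ⟨j, ⟨w.1, hj⟩, rfl⟩

/-- the f-part of the forward map -/
noncomputable def phiF (S : Fin t → Finset α) (hS : ∀ i, (S i).card = k)
    [Nonempty ↥(Finset.univ.biUnion S)]
    (e : ↥(Finset.univ.biUnion S) ↪ β)
    (x : ↥(Finset.univ.biUnion fun j => (phiI S hS e j).1)) : α :=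
  (Function.invFun (fun w : ↥(Finset.univ.biUnion S) => e w) x.1).1

lemma phiF_apply (S : Fin t → Finset α) (hS : ∀ i, (S i).card = k)
    [Nonempty ↥(Finset.univ.biUnion S)]
    (e : ↥(Finset.univ.biUnion S) ↪ β) (w : ↥(Finset.univ.biUnion S))
    (h : (e w : β) ∈ Finset.univ.biUnion fun j => (phiI S hS e j).1) :
    phiF S hS e ⟨e w, h⟩ = w.1 := by
  have hEinj : Function.Injective (fun w : ↥(Finset.univ.biUnion S) => (e w : β)) :=
    fun a b hab => e.injective hab
  have : Function.invFun (fun w : ↥(Finset.univ.biUnion S) => (e w : β)) (e w) = w :=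
    Function.leftInverse_invFun hEinj w
  exact congrArg Subtype.val this

lemma phiF_injective (S : Fin t → Finset α) (hS : ∀ i, (S i).card = k)
    [Nonempty ↥(Finset.univ.biUnion S)] (e : ↥(Finset.univ.biUnion S) ↪ β) :
    Function.Injective (phiF S hS e) := by
  intro x y hxy
  obtain ⟨wx, hwx⟩ := (mem_phiU S hS e x.1).mp x.2
  obtain ⟨wy, hwy⟩ := (mem_phiU S hS e y.1).mp y.2
  have hx : x = ⟨e wx, hwx ▸ x.2⟩ := Subtype.ext hwx.symm
  have hy : y = ⟨e wy, hwy ▸ y.2⟩ := Subtype.ext hwy.symm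
  rw [hx, phiF_apply, hy, phiF_apply] at hxy
  have hw : wx = wy := Subtype.ext hxy
  rw [hx, hy]
  exact Subtype.ext (congrArg (fun w => (e w : β)) hw)

lemma phiF_out (S : Fin t → Finset α) (hS : ∀ i, (S i).card = k)
    [Nonempty ↥(Finset.univ.biUnion S)] (e : ↥(Finset.univ.biUnion S) ↪ β) :
    S = fun i => Finset.image
      (fun x => phiF S hS e ⟨x.1, Finset.mem_biUnion.mpr ⟨i, Finset.mem_univ i, x.2⟩⟩)
      ((phiI S hS e i).1.attach) := by
  funext i
  ext a
  constructor
  · intro ha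
    have hmem : (e ⟨a, memW i a ha⟩ : β) ∈ (phiI S hS e i).1 :=
      Finset.mem_image.mpr ⟨⟨a, ha⟩, Finset.mem_attach _ _, rfl⟩
    refine Finset.mem_image.mpr ⟨⟨e ⟨a, memW i a ha⟩, hmem⟩, Finset.mem_attach _ _, ?_⟩
    exact phiF_apply S hS e ⟨a, memW i a ha⟩ _
  · intro ha
    obtain ⟨x, -, rfl⟩ := Finset.mem_image.mp ha
    obtain ⟨s, -, hs⟩ := Finset.mem_image.mp x.2
    have hx : (⟨x.1, Finset.mem_biUnion.mpr ⟨i, Finset.mem_univ i, x.2⟩⟩ :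
        ↥(Finset.univ.biUnion fun j => (phiI S hS e j).1))
        = ⟨e ⟨s.1, memW i s.1 s.2⟩, hs ▸ Finset.mem_biUnion.mpr ⟨i, Finset.mem_univ i, x.2⟩⟩ :=
      Subtype.ext hs.symm
    rw [hx, phiF_apply]
    exact s.2

/-- the forward map -/
noncomputable def Phi (S : Fin t → Finset α) (hS : ∀ i, (S i).card = k)
    [Nonempty ↥(Finset.univ.biUnion S)]
    (e : ↥(Finset.univ.biUnion S) ↪ β) : SigT S k β :=
  ⟨phiI S hS e, phiF S hS e, phiF_injective S hS e, phiF_out S hS e⟩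

lemma nonempty_U (ht : 0 < t) (hk : 0 < k) (I : Fin t → {I : Finset β // I.card = k}) :
    Nonempty ↥(Finset.univ.biUnion fun j => (I j).1) := by
  obtain ⟨b, hb⟩ := Finset.card_pos.mp (by rw [(I ⟨0, ht⟩).2]; exact hk)
  exact ⟨⟨b, Finset.mem_biUnion.mpr ⟨⟨0, ht⟩, Finset.mem_univ _, hb⟩⟩⟩

lemma f_surjW (S : Fin t → Finset α) (p : SigT S k β) (w : ↥(Finset.univ.biUnion S)) :
    ∃ x, p.2.1 x = w.1 := by
  obtain ⟨j, -, hj⟩ := Finset.mem_biUnion.mp w.2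
  rw [congrFun p.2.2.2 j] at hj
  obtain ⟨x, -, hx⟩ := Finset.mem_image.mp hj
  exact ⟨_, hx⟩

lemma f_invFun (S : Fin t → Finset α) (p : SigT S k β)
    [Nonempty ↥(Finset.univ.biUnion fun j => (p.1 j).1)]
    (w : ↥(Finset.univ.biUnion S)) :
    p.2.1 (Function.invFun p.2.1 w.1) = w.1 :=
  Function.invFun_eq (f_surjW S p w)

/-- the inverse map -/
noncomputable def Psi (S : Fin t → Finset α) (ht : 0 < t) (hk : 0 < k)
    (p : SigT S k β) : ↥(Finset.univ.biUnion S) ↪ β :=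
  haveI := nonempty_U ht hk p.1
  ⟨fun w => (Function.invFun p.2.1 w.1 : ↥(Finset.univ.biUnion fun j => (p.1 j).1)).1, by
    intro w1 w2 h
    haveI := nonempty_U ht hk p.1
    have h2 : Function.invFun p.2.1 (w1.1 : α) = Function.invFun p.2.1 (w2.1 : α) :=
      Subtype.ext h
    have h3 := congrArg p.2.1 h2
    rw [f_invFun S p w1, f_invFun S p w2] at h3
    exact Subtype.ext h3⟩

lemma Psi_apply (S : Fin t → Finset α) (ht : 0 < t) (hk : 0 < k) (p : SigT S k β)
    [Nonempty ↥(Finset.univ.biUnion fun j => (p.1 j).1)]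
    (w : ↥(Finset.univ.biUnion S)) :
    Psi S ht hk p w = (Function.invFun p.2.1 w.1 :
      ↥(Finset.univ.biUnion fun j => (p.1 j).1)).1 := rfl

lemma Psi_Phi (S : Fin t → Finset α) (hS : ∀ i, (S i).card = k)
    [Nonempty ↥(Finset.univ.biUnion S)] (ht : 0 < t) (hk : 0 < k)
    (e : ↥(Finset.univ.biUnion S) ↪ β) :
    Psi S ht hk (Phi S hS e) = e := by
  haveI : Nonempty ↥(Finset.univ.biUnion fun j => (phiI S hS e j).1) :=
    nonempty_U ht hk (phiI S hS e)
  ext w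
  have hU : (e w : β) ∈ Finset.univ.biUnion fun j => (phiI S hS e j).1 :=
    (mem_phiU S hS e _).mpr ⟨w, rfl⟩
  have h1 : phiF S hS e ⟨e w, hU⟩ = w.1 := phiF_apply S hS e w hU
  have h2 : phiF S hS e (Function.invFun (phiF S hS e) (w.1 : α)) = w.1 :=
    Function.invFun_eq ⟨⟨e w, hU⟩, h1⟩
  have h3 : Function.invFun (phiF S hS e) (w.1 : α) = ⟨e w, hU⟩ :=
    phiF_injective S hS e (h2.trans h1.symm)
  show (Function.invFun (phiF S hS e) (w.1 : α) :
      ↥(Finset.univ.biUnion fun j => (phiI S hS e j).1)).1 = e w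
  rw [h3]

lemma Phi_Psi (S : Fin t → Finset α) (hS : ∀ i, (S i).card = k)
    [Nonempty ↥(Finset.univ.biUnion S)] (ht : 0 < t) (hk : 0 < k)
    (p : SigT S k β) :
    Phi S hS (Psi S ht hk p) = p := by
  obtain ⟨I, f, hinj, hout⟩ := p
  haveI hUne : Nonempty ↥(Finset.univ.biUnion fun j => (I j).1) := nonempty_U ht hk I
  set e := Psi S ht hk ⟨I, f, hinj, hout⟩ with hedef
  -- key pointwise facts
  have hinvf : ∀ w : ↥(Finset.univ.biUnion S), f (Function.invFun f w.1) = w.1 := by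
    intro w
    exact f_invFun S ⟨I, f, hinj, hout⟩ w
  have he : ∀ w : ↥(Finset.univ.biUnion S),
      (e w : β) = (Function.invFun f w.1 : ↥(Finset.univ.biUnion fun j => (I j).1)).1 := by
    intro w; rfl
  -- first component
  have hfst : phiI S hS e = I := by
    funext j
    apply Subtype.ext
    ext b
    constructor
    · intro hb
      obtain ⟨s, -, hs⟩ := Finset.mem_image.mp hb
      obtain ⟨sv, hsv⟩ := s
      rw [he] at hs
      have hsS : sv ∈ S j := hsv
      rw [congrFun hout j] at hsS
      obtain ⟨y, -, hy⟩ := Finset.mem_image.mp hsS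
      have hiv : Function.invFun f sv
          = ⟨y.1, Finset.mem_biUnion.mpr ⟨j, Finset.mem_univ j, y.2⟩⟩ := by
        apply hinj
        rw [hy]
        exact f_invFun S ⟨I, f, hinj, hout⟩ ⟨sv, memW j sv hsv⟩
      have hb2 : (Function.invFun f sv :
          ↥(Finset.univ.biUnion fun j => (I j).1)).1 = b := hs
      rw [hiv] at hb2
      rw [← hb2]
      exact y.2
    · intro hb
      have hbU : b ∈ Finset.univ.biUnion fun j => (I j).1 :=
        Finset.mem_biUnion.mpr ⟨j, Finset.mem_univ j, hb⟩
      have hfb : f ⟨b, hbU⟩ ∈ S j := by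
        rw [congrFun hout j]
        exact Finset.mem_image.mpr ⟨⟨b, hb⟩, Finset.mem_attach _ _, rfl⟩
      refine Finset.mem_image.mpr ⟨⟨f ⟨b, hbU⟩, hfb⟩, Finset.mem_attach _ _, ?_⟩
      rw [he]
      have : Function.invFun f (f ⟨b, hbU⟩) = ⟨b, hbU⟩ :=
        Function.leftInverse_invFun hinj _
      rw [this]
  -- second component, via generalization
  have key : ∀ (J : Fin t → {I : Finset β // I.card = k}) (hJ : J = I)
      (g : {f' : ↥(Finset.univ.biUnion fun j => (J j).1) → α //
        Function.Injective f' ∧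
          S = fun i => Finset.image
            (fun x => f' ⟨x.1, Finset.mem_biUnion.mpr ⟨i, Finset.mem_univ i, x.2⟩⟩)
            ((J i).1.attach)}),
      (∀ (x : β) (hx : x ∈ Finset.univ.biUnion fun j => (J j).1)
          (hx' : x ∈ Finset.univ.biUnion fun j => (I j).1),
        g.1 ⟨x, hx⟩ = f ⟨x, hx'⟩) →
      (⟨J, g⟩ : SigT S k β) = ⟨I, f, hinj, hout⟩ := by
    intro J hJ
    subst hJ
    intro g hg
    have : g = ⟨f, hinj, hout⟩ := by
      apply Subtype.ext
      funext x
      exact hg x.1 x.2 x.2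
    rw [this]
  refine key (phiI S hS e) hfst ⟨phiF S hS e, phiF_injective S hS e, phiF_out S hS e⟩ ?_
  intro x hx hx'
  -- phiF e ⟨x, hx⟩ = f ⟨x, hx'⟩
  have hfxW : f ⟨x, hx'⟩ ∈ Finset.univ.biUnion S := by
    obtain ⟨j, -, hj⟩ := Finset.mem_biUnion.mp hx'
    refine memW j _ ?_
    rw [congrFun hout j]
    exact Finset.mem_image.mpr ⟨⟨x, hj⟩, Finset.mem_attach _ _, rfl⟩
  have hew : (e ⟨f ⟨x, hx'⟩, hfxW⟩ : β) = x := by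
    rw [he]
    have : Function.invFun f (f ⟨x, hx'⟩) = ⟨x, hx'⟩ :=
      Function.leftInverse_invFun hinj _
    rw [this]
  have hx2 : (e ⟨f ⟨x, hx'⟩, hfxW⟩ : β) ∈ Finset.univ.biUnion fun j => (phiI S hS e j).1 :=
    (mem_phiU S hS e _).mpr ⟨⟨f ⟨x, hx'⟩, hfxW⟩, rfl⟩
  have hxeq : (⟨x, hx⟩ : ↥(Finset.univ.biUnion fun j => (phiI S hS e j).1))
      = ⟨e ⟨f ⟨x, hx'⟩, hfxW⟩, hx2⟩ := Subtype.ext hew.symm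
  rw [hxeq]
  exact phiF_apply S hS e ⟨f ⟨x, hx'⟩, hfxW⟩ hx2

lemma aux_sigma_card (S : Fin t → Finset α) (hS : ∀ i, (S i).card = k)
    (ht : 0 < t) (hk : 0 < k) :
    Fintype.card (SigT S k β)
      = (Fintype.card β).descFactorial (Finset.univ.biUnion S).card := by
  haveI hWne : Nonempty ↥(Finset.univ.biUnion S) := by
    obtain ⟨a, ha⟩ := Finset.card_pos.mp (by rw [hS ⟨0, ht⟩]; exact hk)
    exact ⟨⟨a, memW ⟨0, ht⟩ a ha⟩⟩
  have E : (↥(Finset.univ.biUnion S) ↪ β) ≃ SigT S k β :=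
    { toFun := Phi S hS
      invFun := Psi S ht hk
      left_inv := Psi_Phi S hS ht hk
      right_inv := Phi_Psi S hS ht hk }
  rw [← Fintype.card_congr E, Fintype.card_embedding_eq, Fintype.card_coe]










lemma aux_main_I {α β : Type*} [Fintype α] [Fintype β] [DecidableEq α] [DecidableEq β]
    {t k n : ℕ} (hn : n ≤ Fintype.card α)
    (S : Fin t → Finset α)
    (I : Fin t → {I : Finset β // I.card = k})
    (hu : (Finset.univ.biUnion fun j => (I j).1).card ≤ n) :
    ∑ C : {C : Finset α // C.card = n},
      (Fintype.card {C : Finset α // C.card = n} : ℝ≥0∞)⁻¹ *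
        ∑ g : {g : ↥(Finset.univ.biUnion fun j => (I j).1) → α //
            Function.Injective g ∧ ∀ x, g x ∈ C.1},
          (if S = (fun i => Finset.image
              (fun x => g.1 ⟨x.1, Finset.mem_biUnion.mpr ⟨i, Finset.mem_univ i, x.2⟩⟩)
              ((I i).1.attach)) then
            (Fintype.card {g : ↥(Finset.univ.biUnion fun j => (I j).1) → α //
                Function.Injective g ∧ ∀ x, g x ∈ C.1} : ℝ≥0∞)⁻¹ else 0)
    = ((Finset.univ.filter fun f : ↥(Finset.univ.biUnion fun j => (I j).1) → α =>
          Function.Injective f ∧ S = (fun i => Finset.image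
            (fun x => f ⟨x.1, Finset.mem_biUnion.mpr ⟨i, Finset.mem_univ i, x.2⟩⟩)
            ((I i).1.attach))).card : ℝ≥0∞) *
        ((Fintype.card α).descFactorial (Finset.univ.biUnion S).card : ℝ≥0∞)⁻¹ := by
  classical
  set u : ℕ := (Finset.univ.biUnion fun j => (I j).1).card with hudef
  have hcardcoe : Fintype.card ↥(Finset.univ.biUnion fun j => (I j).1) = u := Fintype.card_coe _
  -- the cardinality of the injective-function space
  have hGT : ∀ C : {C : Finset α // C.card = n},
      Fintype.card {g : ↥(Finset.univ.biUnion fun j => (I j).1) → α //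
          Function.Injective g ∧ ∀ x, g x ∈ C.1}
        = n.descFactorial u := by
    intro C
    rw [aux_card_inj C.1, C.2, hcardcoe]
  -- step 1: rewrite inner sums as filter cards
  have h1 : ∀ C : {C : Finset α // C.card = n},
      (∑ g : {g : ↥(Finset.univ.biUnion fun j => (I j).1) → α //
            Function.Injective g ∧ ∀ x, g x ∈ C.1},
          (if S = (fun i => Finset.image
              (fun x => g.1 ⟨x.1, Finset.mem_biUnion.mpr ⟨i, Finset.mem_univ i, x.2⟩⟩)
              ((I i).1.attach)) then
            (Fintype.card {g : ↥(Finset.univ.biUnion fun j => (I j).1) → α //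
                Function.Injective g ∧ ∀ x, g x ∈ C.1} : ℝ≥0∞)⁻¹ else 0))
      = ((Finset.univ.filter fun f : ↥(Finset.univ.biUnion fun j => (I j).1) → α =>
            (Function.Injective f ∧ ∀ x, f x ∈ C.1) ∧ S = (fun i => Finset.image
              (fun x => f ⟨x.1, Finset.mem_biUnion.mpr ⟨i, Finset.mem_univ i, x.2⟩⟩)
              ((I i).1.attach))).card : ℝ≥0∞) * ((n.descFactorial u : ℝ≥0∞))⁻¹ := by
    intro C
    rw [hGT C]
    rw [← Finset.sum_subtype
      (Finset.univ.filter fun f : ↥(Finset.univ.biUnion fun j => (I j).1) → α =>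
        Function.Injective f ∧ ∀ x, f x ∈ C.1)
      (fun f => by simp)
      (fun f => (if S = (fun i => Finset.image
              (fun x => f ⟨x.1, Finset.mem_biUnion.mpr ⟨i, Finset.mem_univ i, x.2⟩⟩)
              ((I i).1.attach)) then ((n.descFactorial u : ℝ≥0∞))⁻¹ else 0))]
    rw [Finset.sum_ite, Finset.sum_const_zero, add_zero, Finset.sum_const,
      Finset.filter_filter, nsmul_eq_mul]
  calc ∑ C : {C : Finset α // C.card = n},
        (Fintype.card {C : Finset α // C.card = n} : ℝ≥0∞)⁻¹ *
          ∑ g : {g : ↥(Finset.univ.biUnion fun j => (I j).1) → α //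
              Function.Injective g ∧ ∀ x, g x ∈ C.1},
            (if S = (fun i => Finset.image
                (fun x => g.1 ⟨x.1, Finset.mem_biUnion.mpr ⟨i, Finset.mem_univ i, x.2⟩⟩)
                ((I i).1.attach)) then
              (Fintype.card {g : ↥(Finset.univ.biUnion fun j => (I j).1) → α //
                  Function.Injective g ∧ ∀ x, g x ∈ C.1} : ℝ≥0∞)⁻¹ else 0)
      = ∑ C : {C : Finset α // C.card = n},
          ((Finset.univ.filter fun f : ↥(Finset.univ.biUnion fun j => (I j).1) → α =>
            (Function.Injective f ∧ ∀ x, f x ∈ C.1) ∧ S = (fun i => Finset.image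
              (fun x => f ⟨x.1, Finset.mem_biUnion.mpr ⟨i, Finset.mem_univ i, x.2⟩⟩)
              ((I i).1.attach))).card : ℝ≥0∞) *
            ((Fintype.card {C : Finset α // C.card = n} : ℝ≥0∞) *
              (n.descFactorial u : ℝ≥0∞))⁻¹ := by
        refine Finset.sum_congr rfl fun C _ => ?_
        rw [h1 C, ENNReal.mul_inv (Or.inr (ENNReal.natCast_ne_top _))
          (Or.inl (ENNReal.natCast_ne_top _))]
        ring
    _ = (((Finset.univ.filter fun f : ↥(Finset.univ.biUnion fun j => (I j).1) → α =>
            Function.Injective f ∧ S = (fun i => Finset.image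
              (fun x => f ⟨x.1, Finset.mem_biUnion.mpr ⟨i, Finset.mem_univ i, x.2⟩⟩)
              ((I i).1.attach))).card : ℝ≥0∞) *
            ((Fintype.card α - u).choose (n - u) : ℝ≥0∞)) *
            ((Fintype.card {C : Finset α // C.card = n} : ℝ≥0∞) *
              (n.descFactorial u : ℝ≥0∞))⁻¹ := by
        rw [← Finset.sum_mul, ← Nat.cast_sum]
        congr 2
        have := aux_sum_C (α := α) (γ := ↥(Finset.univ.biUnion fun j => (I j).1)) n
          (by rw [hcardcoe]; exact hu)
          (fun f => S = (fun i => Finset.image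
            (fun x => f ⟨x.1, Finset.mem_biUnion.mpr ⟨i, Finset.mem_univ i, x.2⟩⟩)
            ((I i).1.attach)))
        rw [this, hcardcoe]
        push_cast
        ring
    _ = ((Finset.univ.filter fun f : ↥(Finset.univ.biUnion fun j => (I j).1) → α =>
          Function.Injective f ∧ S = (fun i => Finset.image
            (fun x => f ⟨x.1, Finset.mem_biUnion.mpr ⟨i, Finset.mem_univ i, x.2⟩⟩)
            ((I i).1.attach))).card : ℝ≥0∞) *
        ((Fintype.card α).descFactorial (Finset.univ.biUnion S).card : ℝ≥0∞)⁻¹ := by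
        -- split on whether the filter is empty
        by_cases hB : (Finset.univ.filter fun f : ↥(Finset.univ.biUnion fun j => (I j).1) → α =>
          Function.Injective f ∧ S = (fun i => Finset.image
            (fun x => f ⟨x.1, Finset.mem_biUnion.mpr ⟨i, Finset.mem_univ i, x.2⟩⟩)
            ((I i).1.attach))).card = 0
        · rw [hB]; simp
        · -- nonempty: extract a witness, get u = w
          obtain ⟨f, hf⟩ := Finset.card_pos.mp (Nat.pos_of_ne_zero hB)
          rw [Finset.mem_filter] at hf
          have hw : u = (Finset.univ.biUnion S).card := aux_card_U S I f hf.2.1 hf.2.2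
          -- now the χ/(cC·d) = 1/descF computation
          rw [mul_assoc]
          congr 1
          rw [Fintype.card_finset_len]
          have hid : ((Fintype.card α - u).choose (n - u)) * (Fintype.card α).descFactorial u
              = (Fintype.card α).choose n * n.descFactorial u := aux_nat_id hu hn
          have hchi : ((Fintype.card α - u).choose (n - u) : ℝ≥0∞) ≠ 0 := by
            exact_mod_cast (Nat.choose_pos (show n - u ≤ Fintype.card α - u by omega)).ne'
          have hcast : ((Fintype.card α).choose n : ℝ≥0∞) * (n.descFactorial u : ℝ≥0∞)
              = ((Fintype.card α - u).choose (n - u) : ℝ≥0∞) *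
                ((Fintype.card α).descFactorial u : ℝ≥0∞) := by
            rw [← Nat.cast_mul, ← Nat.cast_mul, hid]
          have hd0 : ((Fintype.card α).descFactorial u : ℝ≥0∞) ≠ 0 := by
            have h1 : (Fintype.card α).descFactorial u ≠ 0 := by
              intro hcontr
              exact absurd (Nat.descFactorial_eq_zero_iff_lt.mp hcontr)
                (not_lt.mpr (le_trans hu hn))
            exact_mod_cast h1
          rw [hcast, ENNReal.mul_inv (Or.inl hchi) (Or.inr hd0),
            ← mul_assoc, ENNReal.mul_inv_cancel hchi (ENNReal.natCast_ne_top _), one_mul, hw]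

end AuxSigma


lemma aux_rearr {CT IT : Type*} [Fintype CT] [Fintype IT]
    (F : CT → ℝ≥0∞) (G : IT → ℝ≥0∞) (X : CT → IT → ℝ≥0∞) :
    ∑ C : CT, F C * ∑ I : IT, G I * X C I = ∑ I : IT, G I * ∑ C : CT, F C * X C I := by
  simp only [Finset.mul_sum]
  rw [Finset.sum_comm]
  exact Finset.sum_congr rfl fun I _ => Finset.sum_congr rfl fun C _ => by ring





/-- The sampling process of Lemma 1 / Lemma 5 of the paper, as a `PMF` built with the `PMF` monad
from uniform distributions: sample a size-`n` subset `C` of `α` uniformly; independently sample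
size-`k` subsets `I₁, …, I_t` of `Fin (card α)` uniformly; sample an injective function `g` from
`⋃ⱼ Iⱼ` to `C` uniformly; and output the tuple of images `(g '' I₁, …, g '' I_t)`. -/
noncomputable def sampleProc (α : Type*) [Fintype α] [DecidableEq α] (k n t : ℕ)
    (hkn : k ≤ n) (hn : n ≤ Fintype.card α) (ht : t * k ≤ n) :
    PMF (Fin t → Finset α) :=
  haveI hC : Nonempty {C : Finset α // C.card = n} := by
    obtain ⟨s, -, hs⟩ := Finset.exists_subset_card_eq
      (show n ≤ (Finset.univ : Finset α).card by simpa using hn)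
    exact ⟨⟨s, hs⟩⟩
  haveI hI : Nonempty {I : Finset (Fin (Fintype.card α)) // I.card = k} := by
    obtain ⟨s, -, hs⟩ := Finset.exists_subset_card_eq
      (show k ≤ (Finset.univ : Finset (Fin (Fintype.card α))).card by
        simpa using (hkn.trans hn))
    exact ⟨⟨s, hs⟩⟩
  (PMF.uniformOfFintype {C : Finset α // C.card = n}).bind fun C =>
    (PMF.uniformOfFintype (Fin t → {I : Finset (Fin (Fintype.card α)) // I.card = k})).bind
      fun I =>
        haveI :
            Nonempty {g : ↥(Finset.univ.biUnion fun j => (I j).1) → α //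
              Function.Injective g ∧ ∀ x, g x ∈ C.1} := by
          have hU : (Finset.univ.biUnion fun j => (I j).1).card ≤ n := by
            refine le_trans Finset.card_biUnion_le ?_
            calc ∑ j : Fin t, (I j).1.card = ∑ _j : Fin t, k := by
                  exact Finset.sum_congr rfl fun j _ => (I j).2
              _ = t * k := by simp [Finset.sum_const, mul_comm]
              _ ≤ n := ht
          have hcard :
              Fintype.card ↥(Finset.univ.biUnion fun j => (I j).1) ≤
                Fintype.card ↥C.1 := by
            rw [Fintype.card_coe, Fintype.card_coe]
            exact hU.trans_eq C.2.symm
          obtain ⟨e⟩ := Function.Embedding.nonempty_of_card_le hcard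
          exact ⟨⟨fun x => (e x).1, fun a b hab => e.injective (Subtype.ext hab),
            fun x => (e x).2⟩⟩
        (PMF.uniformOfFintype
            {g : ↥(Finset.univ.biUnion fun j => (I j).1) → α //
              Function.Injective g ∧ ∀ x, g x ∈ C.1}).map fun g i =>
          (I i).1.attach.image fun x =>
            g.1 ⟨x.1, Finset.mem_biUnion.mpr ⟨i, Finset.mem_univ i, x.2⟩⟩

/-- Lemma 1 / Lemma 5 of the paper: under the above sampling process with `t = ⌊n/k⌋`, every tuple
`(S₁, …, S_t)` of size-`k` subsets of `α` receives probability `(N choose k)⁻ᵗ`; i.e. the output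
tuple is distributed as `t` independent uniformly random size-`k` subsets of `α`. -/
theorem stmt4 {α : Type*} [Fintype α] [DecidableEq α] (N k n : ℕ)
    (hN : Fintype.card α = N) (hk : 1 ≤ k) (hkn : k ≤ n) (hn : n ≤ Fintype.card α)
    (S : Fin (n / k) → Finset α) (hS : ∀ i, (S i).card = k) :
    sampleProc α k n (n / k) hkn hn (Nat.div_mul_le_self n k) S =
      ((N.choose k : ℝ≥0∞) ^ (n / k))⁻¹ := by
  classical
  have hk0 : 0 < k := hk
  have ht0 : 0 < n / k := (Nat.one_le_div_iff hk0).mpr hkn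
  have hu : ∀ I : Fin (n / k) → {I : Finset (Fin (Fintype.card α)) // I.card = k},
      (Finset.univ.biUnion fun j => (I j).1).card ≤ n := by
    intro I
    refine le_trans Finset.card_biUnion_le ?_
    calc ∑ j : Fin (n / k), (I j).1.card = ∑ _j : Fin (n / k), k :=
          Finset.sum_congr rfl fun j _ => (I j).2
      _ = (n / k) * k := by simp [Finset.sum_const, mul_comm]
      _ ≤ n := Nat.div_mul_le_self n k
  simp only [sampleProc, PMF.bind_apply, PMF.map_apply, PMF.uniformOfFintype_apply, tsum_fintype]
  rw [aux_rearr
    (fun C : {C : Finset α // C.card = n} =>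
      (Fintype.card {C : Finset α // C.card = n} : ℝ≥0∞)⁻¹)
    (fun _I : Fin (n / k) → {I : Finset (Fin (Fintype.card α)) // I.card = k} =>
      (Fintype.card (Fin (n / k) → {I : Finset (Fin (Fintype.card α)) // I.card = k}) : ℝ≥0∞)⁻¹)
    (fun C I =>
      ∑ g : {g : ↥(Finset.univ.biUnion fun j => (I j).1) → α //
          Function.Injective g ∧ ∀ x, g x ∈ C.1},
        (if S = (fun i => Finset.image
            (fun x => g.1 ⟨x.1, Finset.mem_biUnion.mpr ⟨i, Finset.mem_univ i, x.2⟩⟩)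
            ((I i).1.attach)) then
          (Fintype.card {g : ↥(Finset.univ.biUnion fun j => (I j).1) → α //
              Function.Injective g ∧ ∀ x, g x ∈ C.1} : ℝ≥0∞)⁻¹ else 0))]
  have hmain : ∀ I : Fin (n / k) → {I : Finset (Fin (Fintype.card α)) // I.card = k},
      (∑ C : {C : Finset α // C.card = n},
        (Fintype.card {C : Finset α // C.card = n} : ℝ≥0∞)⁻¹ *
          ∑ g : {g : ↥(Finset.univ.biUnion fun j => (I j).1) → α //
              Function.Injective g ∧ ∀ x, g x ∈ C.1},
            (if S = (fun i => Finset.image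
                (fun x => g.1 ⟨x.1, Finset.mem_biUnion.mpr ⟨i, Finset.mem_univ i, x.2⟩⟩)
                ((I i).1.attach)) then
              (Fintype.card {g : ↥(Finset.univ.biUnion fun j => (I j).1) → α //
                  Function.Injective g ∧ ∀ x, g x ∈ C.1} : ℝ≥0∞)⁻¹ else 0))
      = ((Finset.univ.filter fun f : ↥(Finset.univ.biUnion fun j => (I j).1) → α =>
            Function.Injective f ∧ S = (fun i => Finset.image
              (fun x => f ⟨x.1, Finset.mem_biUnion.mpr ⟨i, Finset.mem_univ i, x.2⟩⟩)
              ((I i).1.attach))).card : ℝ≥0∞) *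
          ((Fintype.card α).descFactorial (Finset.univ.biUnion S).card : ℝ≥0∞)⁻¹ :=
    fun I => aux_main_I hn S I (hu I)
  rw [Finset.sum_congr rfl fun I _ => congrArg _ (hmain I)]
  -- now: ∑ I, cI⁻¹ * (B I * D⁻¹) = (cI)⁻¹
  have hBsum : (∑ I : Fin (n / k) → {I : Finset (Fin (Fintype.card α)) // I.card = k},
      ((Finset.univ.filter fun f : ↥(Finset.univ.biUnion fun j => (I j).1) → α =>
            Function.Injective f ∧ S = (fun i => Finset.image
              (fun x => f ⟨x.1, Finset.mem_biUnion.mpr ⟨i, Finset.mem_univ i, x.2⟩⟩)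
              ((I i).1.attach))).card))
      = (Fintype.card (Fin (Fintype.card α))).descFactorial (Finset.univ.biUnion S).card := by
    have h1 : ∀ I : Fin (n / k) → {I : Finset (Fin (Fintype.card α)) // I.card = k},
        ((Finset.univ.filter fun f : ↥(Finset.univ.biUnion fun j => (I j).1) → α =>
            Function.Injective f ∧ S = (fun i => Finset.image
              (fun x => f ⟨x.1, Finset.mem_biUnion.mpr ⟨i, Finset.mem_univ i, x.2⟩⟩)
              ((I i).1.attach))).card)
        = Fintype.card {f : ↥(Finset.univ.biUnion fun j => (I j).1) → α //
            Function.Injective f ∧ S = (fun i => Finset.image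
              (fun x => f ⟨x.1, Finset.mem_biUnion.mpr ⟨i, Finset.mem_univ i, x.2⟩⟩)
              ((I i).1.attach))} :=
      fun I => (Fintype.card_subtype _).symm
    rw [Finset.sum_congr rfl fun I _ => h1 I, ← Fintype.card_sigma]
    exact aux_sigma_card S hS ht0 hk0
  have hD0 : ((Fintype.card α).descFactorial (Finset.univ.biUnion S).card : ℝ≥0∞) ≠ 0 := by
    have h1 : (Fintype.card α).descFactorial (Finset.univ.biUnion S).card ≠ 0 := by
      intro hcontr
      exact absurd (Nat.descFactorial_eq_zero_iff_lt.mp hcontr)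
        (not_lt.mpr (Finset.card_le_univ _))
    exact_mod_cast h1
  calc ∑ I : Fin (n / k) → {I : Finset (Fin (Fintype.card α)) // I.card = k},
        (Fintype.card (Fin (n / k) → {I : Finset (Fin (Fintype.card α)) // I.card = k}) : ℝ≥0∞)⁻¹ *
        (((Finset.univ.filter fun f : ↥(Finset.univ.biUnion fun j => (I j).1) → α =>
            Function.Injective f ∧ S = (fun i => Finset.image
              (fun x => f ⟨x.1, Finset.mem_biUnion.mpr ⟨i, Finset.mem_univ i, x.2⟩⟩)
              ((I i).1.attach))).card : ℝ≥0∞) *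
          ((Fintype.card α).descFactorial (Finset.univ.biUnion S).card : ℝ≥0∞)⁻¹)
      = (Fintype.card (Fin (n / k) → {I : Finset (Fin (Fintype.card α)) // I.card = k}) : ℝ≥0∞)⁻¹ *
          ((Fintype.card α).descFactorial (Finset.univ.biUnion S).card : ℝ≥0∞)⁻¹ *
          (∑ I : Fin (n / k) → {I : Finset (Fin (Fintype.card α)) // I.card = k},
            (((Finset.univ.filter fun f : ↥(Finset.univ.biUnion fun j => (I j).1) → α =>
            Function.Injective f ∧ S = (fun i => Finset.image
              (fun x => f ⟨x.1, Finset.mem_biUnion.mpr ⟨i, Finset.mem_univ i, x.2⟩⟩)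
              ((I i).1.attach))).card : ℕ) : ℝ≥0∞)) := by
        rw [Finset.mul_sum]
        exact Finset.sum_congr rfl fun I _ => by ring
    _ = (Fintype.card (Fin (n / k) → {I : Finset (Fin (Fintype.card α)) // I.card = k}) : ℝ≥0∞)⁻¹ := by
        rw [← Nat.cast_sum, hBsum, Fintype.card_fin]
        rw [mul_assoc, ENNReal.inv_mul_cancel hD0 (ENNReal.natCast_ne_top _), mul_one]
    _ = ((N.choose k : ℝ≥0∞) ^ (n / k))⁻¹ := by
        rw [Fintype.card_fun, Fintype.card_finset_len, Fintype.card_fin, Fintype.card_fin, hN]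
        rw [Nat.cast_pow]
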